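/- Let ι be a type and p₁, p₂, p₃ ≥ 0 with p₁ + p₂ + p₃ ≤ 1. Let μ₁, μ₂, μ₃ be probability mass functions on Finset ι, locally decaying with rates p₁, p₂, p₃ respectively, and consider the product distribution on triples (S_D, S_A, F) of independent random subsets of ι. Model the qubits of the two code blocks as ι × Bool and define the random output support S_out = (S_D ∪ S_A ∪ F) ×ˢ {false, true} ⊆ ι × Bool. Then for every finite subset E of ι × Bool, the probability that E ⊆ S_out is at most (Real.sqrt (p₁ + p₂ + p₃))^{E.card}; that is, the error support propagated through the noisy transversal CNOT layer is locally decaying with rate √(p₁+p₂+p₃). -/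

import Mathlib

open scoped ENNReal

/-- A probability mass function `μ` on finite subsets of `ι` is *locally decaying*
with rate `τ` if for every finite `B ⊆ ι` the probability that `B` is contained in
the random subset is at most `τ ^ |B|`. -/
def LocallyDecaying {ι : Type*} [DecidableEq ι] (μ : PMF (Finset ι)) (τ : ℝ) : Prop :=
  ∀ B : Finset ι,
    (∑' S : Finset ι, if B ⊆ S then μ S else 0) ≤ ENNReal.ofReal (τ ^ B.card)

private lemma aux_sum_pow {ι : Type*} [DecidableEq ι] (p q : ℝ) (B : Finset ι) :
    ∑ t ∈ B.powerset, p ^ t.card * q ^ (B \ t).card = (p + q) ^ B.card := by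
  have := Finset.prod_add (fun _ : ι => p) (fun _ : ι => q) B
  simp only [Finset.prod_const] at this
  rw [this]

private lemma aux_tsum_finsetSum {α γ : Type*} {s : Finset γ} (f : γ → α → ℝ≥0∞) :
    ∑' x, ∑ i ∈ s, f i x = ∑ i ∈ s, ∑' x, f i x :=
  Summable.tsum_finsetSum fun _ _ => ENNReal.summable

/-- **Equation (final_ld_bound) in the proof of Lemma 1 (before measurement noise).**
The qubits of the two code blocks are modeled as `ι × Bool`.  With independent
locally decaying random subsets `S_D, S_A, F ⊆ ι` of rates `p₁, p₂, p₃ ≥ 0`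
(`p₁ + p₂ + p₃ ≤ 1`), the output error support of the noisy transversal CNOT
layer is contained in `S_out = (S_D ∪ S_A ∪ F) ×ˢ {false, true}`, and for every
finite `E ⊆ ι × Bool` the probability that `E ⊆ S_out` is at most
`(√(p₁ + p₂ + p₃)) ^ |E|`. -/
theorem locallyDecaying_transversal_CNOT {ι : Type*} [DecidableEq ι]
    (p₁ p₂ p₃ : ℝ) (hp₁ : 0 ≤ p₁) (hp₂ : 0 ≤ p₂) (hp₃ : 0 ≤ p₃)
    (hsum : p₁ + p₂ + p₃ ≤ 1)
    (μ₁ μ₂ μ₃ : PMF (Finset ι))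
    (hμ₁ : LocallyDecaying μ₁ p₁) (hμ₂ : LocallyDecaying μ₂ p₂)
    (hμ₃ : LocallyDecaying μ₃ p₃) :
    ∀ E : Finset (ι × Bool),
      (∑' SD : Finset ι, ∑' SA : Finset ι, ∑' F : Finset ι,
          if E ⊆ (SD ∪ SA ∪ F) ×ˢ ({false, true} : Finset Bool)
          then μ₁ SD * μ₂ SA * μ₃ F else 0)
        ≤ ENNReal.ofReal (Real.sqrt (p₁ + p₂ + p₃) ^ E.card) := by
  intro E
  set q : ℝ := p₁ + p₂ + p₃ with hq
  have hq0 : 0 ≤ q := by positivity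
  set B : Finset ι := E.image Prod.fst with hB
  -- Step 1: rewrite the containment condition
  have hcond : ∀ U : Finset ι,
      (E ⊆ U ×ˢ ({false, true} : Finset Bool)) ↔ B ⊆ U := by
    intro U
    constructor
    · intro h i hi
      obtain ⟨x, hx, rfl⟩ := Finset.mem_image.mp hi
      exact (Finset.mem_product.mp (h hx)).1
    · intro h x hx
      refine Finset.mem_product.mpr ⟨h (Finset.mem_image_of_mem _ hx), ?_⟩
      cases x.2 <;> simp
  -- Step 2: union bound over partitions
  have key : (∑' SD : Finset ι, ∑' SA : Finset ι, ∑' F : Finset ι,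
        if B ⊆ SD ∪ SA ∪ F then μ₁ SD * μ₂ SA * μ₃ F else 0)
      ≤ ENNReal.ofReal (q ^ B.card) := by
    -- pointwise bound
    have pt : ∀ S₁ S₂ S₃ : Finset ι,
        (if B ⊆ S₁ ∪ S₂ ∪ S₃ then μ₁ S₁ * μ₂ S₂ * μ₃ S₃ else 0)
        ≤ ∑ B₁ ∈ B.powerset, ∑ B₂ ∈ (B \ B₁).powerset,
            (if B₁ ⊆ S₁ then μ₁ S₁ else 0) *
            ((if B₂ ⊆ S₂ then μ₂ S₂ else 0) *
             (if (B \ B₁) \ B₂ ⊆ S₃ then μ₃ S₃ else 0)) := by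
      intro S₁ S₂ S₃
      split_ifs with h
      · set B₁ : Finset ι := B ∩ S₁ with hB₁
        set B₂ : Finset ι := (B \ B₁) ∩ S₂ with hB₂
        have hm₁ : B₁ ∈ B.powerset := Finset.mem_powerset.mpr Finset.inter_subset_left
        have hm₂ : B₂ ∈ (B \ B₁).powerset := Finset.mem_powerset.mpr Finset.inter_subset_left
        have h₁ : B₁ ⊆ S₁ := Finset.inter_subset_right
        have h₂ : B₂ ⊆ S₂ := Finset.inter_subset_right
        have h₃ : (B \ B₁) \ B₂ ⊆ S₃ := by
          intro b hb
          have hbB : b ∈ B := (Finset.mem_sdiff.mp (Finset.mem_sdiff.mp hb).1).1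
          have hb1 : b ∉ B₁ := (Finset.mem_sdiff.mp (Finset.mem_sdiff.mp hb).1).2
          have hb2 : b ∉ B₂ := (Finset.mem_sdiff.mp hb).2
          have hnS₁ : b ∉ S₁ := fun hs => hb1 (Finset.mem_inter.mpr ⟨hbB, hs⟩)
          have hnS₂ : b ∉ S₂ := fun hs =>
            hb2 (Finset.mem_inter.mpr ⟨(Finset.mem_sdiff.mp hb).1, hs⟩)
          have := h hbB
          simp only [Finset.mem_union] at this
          tauto
        calc μ₁ S₁ * μ₂ S₂ * μ₃ S₃
            = (if B₁ ⊆ S₁ then μ₁ S₁ else 0) *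
              ((if B₂ ⊆ S₂ then μ₂ S₂ else 0) *
               (if (B \ B₁) \ B₂ ⊆ S₃ then μ₃ S₃ else 0)) := by
              rw [if_pos h₁, if_pos h₂, if_pos h₃, mul_assoc]
          _ ≤ ∑ B₂' ∈ (B \ B₁).powerset,
              (if B₁ ⊆ S₁ then μ₁ S₁ else 0) *
              ((if B₂' ⊆ S₂ then μ₂ S₂ else 0) *
               (if (B \ B₁) \ B₂' ⊆ S₃ then μ₃ S₃ else 0)) :=
              Finset.single_le_sum
                (f := fun B₂' => (if B₁ ⊆ S₁ then μ₁ S₁ else 0) *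
                  ((if B₂' ⊆ S₂ then μ₂ S₂ else 0) *
                   (if (B \ B₁) \ B₂' ⊆ S₃ then μ₃ S₃ else 0)))
                (fun _ _ => zero_le) hm₂
          _ ≤ _ :=
              Finset.single_le_sum
                (f := fun B₁' => ∑ B₂' ∈ (B \ B₁').powerset,
                  (if B₁' ⊆ S₁ then μ₁ S₁ else 0) *
                  ((if B₂' ⊆ S₂ then μ₂ S₂ else 0) *
                   (if (B \ B₁') \ B₂' ⊆ S₃ then μ₃ S₃ else 0)))
                (fun _ _ => zero_le) hm₁
      · exact zero_le
    -- factored sums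
    have factored : ∀ B₁ B₂ : Finset ι,
        (∑' S₁ : Finset ι, ∑' S₂ : Finset ι, ∑' S₃ : Finset ι,
          (if B₁ ⊆ S₁ then μ₁ S₁ else 0) *
          ((if B₂ ⊆ S₂ then μ₂ S₂ else 0) *
           (if (B \ B₁) \ B₂ ⊆ S₃ then μ₃ S₃ else 0)))
        = (∑' S₁ : Finset ι, if B₁ ⊆ S₁ then μ₁ S₁ else 0) *
          ((∑' S₂ : Finset ι, if B₂ ⊆ S₂ then μ₂ S₂ else 0) *
           (∑' S₃ : Finset ι, if (B \ B₁) \ B₂ ⊆ S₃ then μ₃ S₃ else 0)) := by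
      intro B₁ B₂
      simp_rw [ENNReal.tsum_mul_left, ENNReal.tsum_mul_right]
    calc (∑' SD : Finset ι, ∑' SA : Finset ι, ∑' F : Finset ι,
          if B ⊆ SD ∪ SA ∪ F then μ₁ SD * μ₂ SA * μ₃ F else 0)
        ≤ ∑' S₁ : Finset ι, ∑' S₂ : Finset ι, ∑' S₃ : Finset ι,
            ∑ B₁ ∈ B.powerset, ∑ B₂ ∈ (B \ B₁).powerset,
              (if B₁ ⊆ S₁ then μ₁ S₁ else 0) *
              ((if B₂ ⊆ S₂ then μ₂ S₂ else 0) *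
               (if (B \ B₁) \ B₂ ⊆ S₃ then μ₃ S₃ else 0)) := by
          refine ENNReal.tsum_le_tsum fun S₁ => ENNReal.tsum_le_tsum fun S₂ =>
            ENNReal.tsum_le_tsum fun S₃ => pt S₁ S₂ S₃
      _ = ∑ B₁ ∈ B.powerset, ∑ B₂ ∈ (B \ B₁).powerset,
            (∑' S₁ : Finset ι, ∑' S₂ : Finset ι, ∑' S₃ : Finset ι,
              (if B₁ ⊆ S₁ then μ₁ S₁ else 0) *
              ((if B₂ ⊆ S₂ then μ₂ S₂ else 0) *
               (if (B \ B₁) \ B₂ ⊆ S₃ then μ₃ S₃ else 0))) := by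
          simp_rw [aux_tsum_finsetSum]
      _ ≤ ∑ B₁ ∈ B.powerset, ∑ B₂ ∈ (B \ B₁).powerset,
            ENNReal.ofReal (p₁ ^ B₁.card * (p₂ ^ B₂.card * p₃ ^ ((B \ B₁) \ B₂).card)) := by
          refine Finset.sum_le_sum fun B₁ _ => Finset.sum_le_sum fun B₂ _ => ?_
          rw [factored B₁ B₂, ENNReal.ofReal_mul (by positivity),
            ENNReal.ofReal_mul (by positivity)]
          exact mul_le_mul' (hμ₁ B₁) (mul_le_mul' (hμ₂ B₂) (hμ₃ _))
      _ = ∑ B₁ ∈ B.powerset,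
            ENNReal.ofReal (∑ B₂ ∈ (B \ B₁).powerset,
              p₁ ^ B₁.card * (p₂ ^ B₂.card * p₃ ^ ((B \ B₁) \ B₂).card)) :=
          Finset.sum_congr rfl fun B₁ _ =>
            (ENNReal.ofReal_sum_of_nonneg fun _ _ => by positivity).symm
      _ = ENNReal.ofReal (∑ B₁ ∈ B.powerset, ∑ B₂ ∈ (B \ B₁).powerset,
            p₁ ^ B₁.card * (p₂ ^ B₂.card * p₃ ^ ((B \ B₁) \ B₂).card)) :=
          (ENNReal.ofReal_sum_of_nonneg fun _ _ =>
            Finset.sum_nonneg fun _ _ => by positivity).symm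
      _ = ENNReal.ofReal (q ^ B.card) := by
          congr 1
          have inner : ∀ B₁ ∈ B.powerset,
              ∑ B₂ ∈ (B \ B₁).powerset,
                p₁ ^ B₁.card * (p₂ ^ B₂.card * p₃ ^ ((B \ B₁) \ B₂).card)
              = p₁ ^ B₁.card * (p₂ + p₃) ^ (B \ B₁).card := by
            intro B₁ _
            rw [← Finset.mul_sum, aux_sum_pow p₂ p₃ (B \ B₁)]
          rw [Finset.sum_congr rfl inner, aux_sum_pow p₁ (p₂ + p₃) B, hq, add_assoc]
  -- Step 3: compare exponents
  have hcard : E.card ≤ 2 * B.card := by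
    refine Finset.card_le_mul_card_image E 2 fun i _ => ?_
    have hsub : Finset.filter (fun x => x.1 = i) E ⊆
        ({(i, false), (i, true)} : Finset (ι × Bool)) := by
      intro x hx
      obtain ⟨_, h1⟩ := Finset.mem_filter.mp hx
      rcases x with ⟨a, b⟩
      cases b <;> simp_all
    calc (Finset.filter (fun x => x.1 = i) E).card
        ≤ ({(i, false), (i, true)} : Finset (ι × Bool)).card := Finset.card_le_card hsub
      _ ≤ 2 := (Finset.card_insert_le _ _).trans (by simp)
  have hfinal : q ^ B.card ≤ Real.sqrt q ^ E.card := by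
    have hs0 : 0 ≤ Real.sqrt q := Real.sqrt_nonneg q
    have hs1 : Real.sqrt q ≤ 1 := by
      rw [show (1:ℝ) = Real.sqrt 1 by simp]
      exact Real.sqrt_le_sqrt hsum
    have hpow : q ^ B.card = Real.sqrt q ^ (2 * B.card) := by
      rw [pow_mul, Real.sq_sqrt hq0]
    rw [hpow]
    exact pow_le_pow_of_le_one hs0 hs1 hcard
  simp only [hcond]
  exact key.trans (ENNReal.ofReal_le_ofReal hfinal)
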